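/- Let 1 ≤ N ≤ 4, let y_1, …, y_N be distinct points in ℝ², and let α ∈ ℝ^N. Then the real linear subspace V = { a ∈ ℝ^N : Σ_{j=1}^N a_j = 0, Σ_{j=1}^N a_j y_j = 0 in ℝ², and D̃ a = 0 } has dimension at most 1. (Consequently, a zero-energy eigenvalue of the two-dimensional Schrödinger operator with point interactions at up to four centres is always non-degenerate.) -/

import Mathlib

open Real Matrix
noncomputable section

/-- The real matrix `D̃(α,Y)`: diagonal entries `α_j`, off-diagonal entries
`(2π)⁻¹ log|y_j - y_k|`. -/
def DtR (N : ℕ) (y : Fin N → EuclideanSpace ℝ (Fin 2)) (α : Fin N → ℝ) :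
    Matrix (Fin N) (Fin N) ℝ :=
  Matrix.of fun j k => if j = k then α j else 1/(2*Real.pi) * Real.log ‖y j - y k‖

private lemma pair_slope {s u C Q : ℝ} (hs : 0 < s) (hsu : s < u)
    (h1 : Real.log s = C + Q * s) (h2 : Real.log u = C + Q * u) :
    1 / u < Q ∧ Q < 1 / s := by
  have hu : 0 < u := hs.trans hsu
  have hus : u / s ≠ 1 := by
    intro h
    rw [div_eq_one_iff_eq hs.ne'] at h
    exact absurd h (ne_of_gt hsu)
  have hsu' : s / u ≠ 1 := by
    intro h
    rw [div_eq_one_iff_eq hu.ne'] at h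
    exact absurd h (ne_of_lt hsu)
  have h3 : Real.log (u / s) < u / s - 1 := Real.log_lt_sub_one_of_pos (by positivity) hus
  have h4 : Real.log (s / u) < s / u - 1 := Real.log_lt_sub_one_of_pos (by positivity) hsu'
  rw [Real.log_div hu.ne' hs.ne'] at h3
  rw [Real.log_div hs.ne' hu.ne'] at h4
  have e : Real.log u - Real.log s = Q * (u - s) := by rw [h1, h2]; ring
  have h3' : Q * (u - s) < u / s - 1 := by linarith
  have h4' : -(Q * (u - s)) < s / u - 1 := by linarith
  constructor
  · rw [div_lt_iff₀ hu]
    have := mul_lt_mul_of_pos_right h4' hu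
    rw [sub_mul, div_mul_cancel₀ _ hu.ne', one_mul] at this
    nlinarith [sub_pos.mpr hsu]
  · rw [lt_div_iff₀ hs]
    have := mul_lt_mul_of_pos_right h3' hs
    rw [sub_mul, div_mul_cancel₀ _ hs.ne', one_mul] at this
    nlinarith [sub_pos.mpr hsu]

private lemma log_affine_sorted {x y z C Q : ℝ} (hx : 0 < x) (hxy : x < y) (hyz : y < z)
    (ex : Real.log x = C + Q * x) (ey : Real.log y = C + Q * y)
    (ez : Real.log z = C + Q * z) : False := by
  obtain ⟨l1, r1⟩ := pair_slope hx hxy ex ey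
  obtain ⟨l2, r2⟩ := pair_slope (hx.trans hxy) hyz ey ez
  linarith

private lemma log_affine_three {u1 u2 u3 C Q : ℝ} (h1 : 0 < u1) (h2 : 0 < u2) (h3 : 0 < u3)
    (n12 : u1 ≠ u2) (n13 : u1 ≠ u3) (n23 : u2 ≠ u3)
    (e1 : Real.log u1 = C + Q * u1) (e2 : Real.log u2 = C + Q * u2)
    (e3 : Real.log u3 = C + Q * u3) : False := by
  rcases n12.lt_or_gt with a12 | a21 <;> rcases n13.lt_or_gt with a13 | a31 <;>
    rcases n23.lt_or_gt with a23 | a32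
  · exact log_affine_sorted h1 a12 a23 e1 e2 e3
  · exact log_affine_sorted h1 a13 a32 e1 e3 e2
  · exact absurd (a12.trans a23) (not_lt.mpr a31.le)
  · exact log_affine_sorted h3 a31 a12 e3 e1 e2
  · exact log_affine_sorted h2 a21 a13 e2 e1 e3
  · exact absurd (a21.trans a13) (not_lt.mpr a32.le)
  · exact log_affine_sorted h2 a23 a31 e2 e3 e1
  · exact log_affine_sorted h3 a32 a21 e3 e2 e1

private lemma log_affine_three' {u1 u2 u3 A B G : ℝ} (hG : G ≠ 0)
    (h1 : 0 < u1) (h2 : 0 < u2) (h3 : 0 < u3)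
    (n12 : u1 ≠ u2) (n13 : u1 ≠ u3) (n23 : u2 ≠ u3)
    (e1 : G * Real.log u1 = A + B * u1) (e2 : G * Real.log u2 = A + B * u2)
    (e3 : G * Real.log u3 = A + B * u3) : False := by
  have f : ∀ u : ℝ, G * Real.log u = A + B * u → Real.log u = A/G + (B/G) * u := by
    intro u h
    field_simp
    linarith
  exact log_affine_three h1 h2 h3 n12 n13 n23 (f u1 e1) (f u2 e2) (f u3 e3)

private lemma mem_span_pair_orthogonal {E : Type*} [NormedAddCommGroup E]
    [InnerProductSpace ℝ E] {a b v : E}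
    (h1 : (inner ℝ a v : ℝ) = 0) (h2 : (inner ℝ b v : ℝ) = 0) :
    v ∈ (Submodule.span ℝ (Set.range ![a, b]))ᗮ := by
  rw [Submodule.mem_orthogonal]
  intro u hu
  induction hu using Submodule.span_induction with
  | mem x hx => obtain ⟨i, rfl⟩ := hx; fin_cases i <;> simpa
  | zero => simp
  | add x y _ _ hx hy => rw [inner_add_left, hx, hy, add_zero]
  | smul c x _ hx => rw [inner_smul_left, hx, mul_zero]

private lemma card_le_finrank_of_mem {ι E : Type*} [Fintype ι] [NormedAddCommGroup E]
    [InnerProductSpace ℝ E] [FiniteDimensional ℝ E] {S : Submodule ℝ E} {v : ι → E}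
    (hv : LinearIndependent ℝ v) (hmem : ∀ i, v i ∈ S) :
    Fintype.card ι ≤ Module.finrank ℝ S := by
  have h : LinearIndependent ℝ (fun i => (⟨v i, hmem i⟩ : S)) :=
    LinearIndependent.of_comp S.subtype (by exact hv)
  exact h.fintype_card_le_finrank

set_option maxHeartbeats 1600000 in
/-- For `N ≤ 4` distinct centres, the space
`V = {a ∈ ℝ^N : Σ a_j = 0, Σ a_j y_j = 0, D̃ a = 0}` has dimension at most 1,
i.e. any two of its elements are linearly dependent (zero modes are
non-degenerate for at most four centres). -/
theorem stmt_11 (N : ℕ) (hN1 : 1 ≤ N) (hN4 : N ≤ 4)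
    (y : Fin N → EuclideanSpace ℝ (Fin 2)) (hy : Function.Injective y)
    (α : Fin N → ℝ)
    (a b : Fin N → ℝ)
    (ha1 : ∑ j, a j = 0) (ha2 : ∑ j, a j • y j = 0) (ha3 : (DtR N y α).mulVec a = 0)
    (hb1 : ∑ j, b j = 0) (hb2 : ∑ j, b j • y j = 0) (hb3 : (DtR N y α).mulVec b = 0) :
    ∃ c d : ℝ, (c ≠ 0 ∨ d ≠ 0) ∧ c • a + d • b = 0 := by
  by_contra hcon
  push_neg at hcon
  let a' : EuclideanSpace ℝ (Fin N) := WithLp.toLp 2 a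
  let b' : EuclideanSpace ℝ (Fin N) := WithLp.toLp 2 b
  have hab : LinearIndependent ℝ ![a', b'] := by
    rw [LinearIndependent.pair_iff]
    intro s t hst
    by_contra hne
    rw [not_and_or] at hne
    have h0 : s ≠ 0 ∨ t ≠ 0 := hne
    exact hcon s t h0 (by simpa [a', b'] using congrArg WithLp.ofLp hst)
  have hN2 : 2 ≤ N := by
    have h := hab.fintype_card_le_finrank
    rw [finrank_euclideanSpace] at h
    simpa using h
  let U : Submodule ℝ (EuclideanSpace ℝ (Fin N)) := Submodule.span ℝ (Set.range ![a', b'])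
  have hUrank : Module.finrank ℝ U = 2 := by
    rw [finrank_span_eq_card hab]; simp
  have hSrank : Module.finrank ℝ Uᗮ + 2 = N := by
    have h := Submodule.finrank_add_finrank_orthogonal U
    rw [hUrank, finrank_euclideanSpace] at h
    simp at h
    omega
  have hAy : ∀ i : Fin 2, ∑ j, a j * y j i = 0 := by
    intro i
    have h := congrArg (EuclideanSpace.proj i) ha2
    simpa using h
  have hBy : ∀ i : Fin 2, ∑ j, b j * y j i = 0 := by
    intro i
    have h := congrArg (EuclideanSpace.proj i) hb2
    simpa using h
  have hmemS : ∀ v : EuclideanSpace ℝ (Fin N),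
      (∑ j, a j * v j) = 0 → (∑ j, b j * v j) = 0 → v ∈ Uᗮ := by
    intro v h1 h2
    apply mem_span_pair_orthogonal
    · simpa [PiLp.inner_apply, a', mul_comm] using h1
    · simpa [PiLp.inner_apply, b', mul_comm] using h2
  let one : EuclideanSpace ℝ (Fin N) := WithLp.toLp 2 (fun _ => (1:ℝ))
  have hone : one ∈ Uᗮ := by
    apply hmemS <;> simp only [one, mul_one] <;> assumption
  let Y1 : EuclideanSpace ℝ (Fin N) := WithLp.toLp 2 (fun j => y j 0)
  let Y2 : EuclideanSpace ℝ (Fin N) := WithLp.toLp 2 (fun j => y j 1)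
  have hY1 : Y1 ∈ Uᗮ := hmemS Y1 (hAy 0) (hBy 0)
  have hY2 : Y2 ∈ Uᗮ := hmemS Y2 (hAy 1) (hBy 1)
  have hdep3 : ∀ v1 v2 v3 : EuclideanSpace ℝ (Fin N), v1 ∈ Uᗮ → v2 ∈ Uᗮ → v3 ∈ Uᗮ →
      ¬ LinearIndependent ℝ ![v1, v2, v3] := by
    intro v1 v2 v3 h1 h2 h3 hli
    have h := card_le_finrank_of_mem hli (by
      intro i; fin_cases i <;> assumption)
    simp at h
    omega
  obtain ⟨g, hg, i0, hi0⟩ :=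
    Fintype.not_linearIndependent_iff.mp (hdep3 one Y1 Y2 hone hY1 hY2)
  rw [Fin.sum_univ_three] at hg
  simp only [Matrix.cons_val_zero, Matrix.cons_val_one, Matrix.head_cons,
    Matrix.cons_val_two, Matrix.tail_cons] at hg
  have hline : ∀ j, g 0 + g 1 * y j 0 + g 2 * y j 1 = 0 := by
    intro j
    have h := congrArg (EuclideanSpace.proj j) hg
    simpa [one, Y1, Y2] using h
  have hμν : g 1 ≠ 0 ∨ g 2 ≠ 0 := by
    by_contra h
    push_neg at h
    obtain ⟨h1, h2⟩ := h
    have h0 : g 0 = 0 := by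
      have := hline ⟨0, by omega⟩
      rw [h1, h2] at this; linarith
    fin_cases i0 <;> simp_all
  have hm : (0:ℝ) < g 1 ^ 2 + g 2 ^ 2 := by
    rcases hμν with h | h <;> positivity
  let t : Fin N → ℝ := fun j => -(g 2) * y j 0 + g 1 * y j 1
  let tE : EuclideanSpace ℝ (Fin N) := WithLp.toLp 2 t
  have hT : tE ∈ Uᗮ := by
    apply hmemS
    · have key : ∑ j, a j * t j
          = -(g 2) * (∑ j, a j * y j 0) + g 1 * (∑ j, a j * y j 1) := by
        rw [Finset.mul_sum, Finset.mul_sum, ← Finset.sum_add_distrib]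
        exact Finset.sum_congr rfl (fun j _ => by simp only [t]; ring)
      rw [key, hAy 0, hAy 1]; ring
    · have key : ∑ j, b j * t j
          = -(g 2) * (∑ j, b j * y j 0) + g 1 * (∑ j, b j * y j 1) := by
        rw [Finset.mul_sum, Finset.mul_sum, ← Finset.sum_add_distrib]
        exact Finset.sum_congr rfl (fun j _ => by simp only [t]; ring)
      rw [key, hBy 0, hBy 1]; ring
  have htinj : Function.Injective t := by
    intro j k hjk
    have e1 : g 1 * (y j 0 - y k 0) + g 2 * (y j 1 - y k 1) = 0 := by
      linear_combination hline j - hline k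
    have e2 : -(g 2) * (y j 0 - y k 0) + g 1 * (y j 1 - y k 1) = 0 := by
      simp only [t] at hjk
      linear_combination hjk
    have hd0 : y j 0 - y k 0 = 0 := by
      have key : (g 1 ^ 2 + g 2 ^ 2) * (y j 0 - y k 0) = 0 := by
        linear_combination g 1 * e1 - g 2 * e2
      exact (mul_eq_zero.mp key).resolve_left hm.ne'
    have hd1 : y j 1 - y k 1 = 0 := by
      have key : (g 1 ^ 2 + g 2 ^ 2) * (y j 1 - y k 1) = 0 := by
        linear_combination g 2 * e1 + g 1 * e2
      exact (mul_eq_zero.mp key).resolve_left hm.ne'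
    apply hy
    have h0 : y j 0 = y k 0 := sub_eq_zero.mp hd0
    have h1 : y j 1 = y k 1 := sub_eq_zero.mp hd1
    exact PiLp.ext fun i => by fin_cases i <;> [exact h0; exact h1]
  have hone_t_indep : LinearIndependent ℝ ![one, tE] := by
    rw [LinearIndependent.pair_iff]
    intro s r hsr
    have j0 : Fin N := ⟨0, by omega⟩
    have key : ∀ j : Fin N, s + r * t j = 0 := by
      intro j
      have h := congrArg (EuclideanSpace.proj j) hsr
      simpa [one] using h
    have k0 := key ⟨0, by omega⟩
    have k1 := key ⟨1, by omega⟩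
    have htne : t ⟨0, by omega⟩ ≠ t ⟨1, by omega⟩ := by
      intro h
      have := htinj h
      simp [Fin.ext_iff] at this
    have hr : r = 0 := by
      by_contra hr
      apply htne
      have : r * (t ⟨0, by omega⟩ - t ⟨1, by omega⟩) = 0 := by linarith
      have := (mul_eq_zero.mp this).resolve_left hr
      linarith
    constructor
    · rw [hr] at k0; linarith
    · exact hr
  have hNeq : N = 4 := by
    by_contra hne
    have h2 : 2 ≤ Module.finrank ℝ Uᗮ := by
      have h := card_le_finrank_of_mem hone_t_indep (by
        intro i; fin_cases i <;> assumption)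
      simpa using h
    omega
  subst hNeq
  obtain ⟨j₀, hj₀⟩ := Finite.exists_min t
  let R : EuclideanSpace ℝ (Fin 4) := WithLp.toLp 2 (fun k => DtR 4 y α j₀ k)
  have hRa : ∑ k, a k * R k = 0 := by
    have h := congrFun ha3 j₀
    simp only [Matrix.mulVec, dotProduct, Pi.zero_apply] at h
    rw [← h]
    exact Finset.sum_congr rfl fun k _ => mul_comm _ _
  have hRb : ∑ k, b k * R k = 0 := by
    have h := congrFun hb3 j₀
    simp only [Matrix.mulVec, dotProduct, Pi.zero_apply] at h
    rw [← h]
    exact Finset.sum_congr rfl fun k _ => mul_comm _ _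
  have hR : R ∈ Uᗮ := hmemS R hRa hRb
  obtain ⟨g', hg', i0', hi0'⟩ :=
    Fintype.not_linearIndependent_iff.mp
      (hdep3 one tE R hone hT hR)
  rw [Fin.sum_univ_three] at hg'
  simp only [Matrix.cons_val_zero, Matrix.cons_val_one, Matrix.head_cons,
    Matrix.cons_val_two, Matrix.tail_cons] at hg'
  have hg2 : g' 2 ≠ 0 := by
    intro h2
    have hrel : g' 0 • one + g' 1 • tE = 0 := by
      rw [h2] at hg'; simpa using hg'
    obtain ⟨e0, e1⟩ := LinearIndependent.pair_iff.mp hone_t_indep (g' 0) (g' 1) hrel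
    fin_cases i0' <;> simp_all
  have hrow : ∀ k, g' 0 + g' 1 * t k + g' 2 * DtR 4 y α j₀ k = 0 := by
    intro k
    have h := congrArg (EuclideanSpace.proj k) hg'
    simpa [one, R] using h
  have hπ : (2 * Real.pi) * (1 / (2 * Real.pi)) = 1 :=
    mul_one_div_cancel (by positivity)
  have hkey : ∀ k, k ≠ j₀ →
      g' 2 * Real.log (t k - t j₀) =
        (g' 2 * (Real.log (g 1 ^ 2 + g 2 ^ 2) / 2) - 2 * Real.pi * g' 0
          - 2 * Real.pi * g' 1 * t j₀)
        + (-(2 * Real.pi) * g' 1) * (t k - t j₀) := by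
    intro k hk
    have hu : 0 < t k - t j₀ := by
      have h1 := hj₀ k
      have h2 : t j₀ ≠ t k := fun h => hk (htinj h).symm
      have := lt_of_le_of_ne h1 h2
      linarith
    -- geometry : squared norm identity
    have e1 : g 1 * (y j₀ 0 - y k 0) + g 2 * (y j₀ 1 - y k 1) = 0 := by
      linear_combination hline j₀ - hline k
    have e2 : -(g 2) * (y j₀ 0 - y k 0) + g 1 * (y j₀ 1 - y k 1) = t j₀ - t k := by
      simp only [t]; ring
    have hsq : (y j₀ 0 - y k 0) ^ 2 + (y j₀ 1 - y k 1) ^ 2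
        = (t k - t j₀) ^ 2 / (g 1 ^ 2 + g 2 ^ 2) := by
      rw [eq_div_iff hm.ne']
      linear_combination (g 1 * (y j₀ 0 - y k 0) + g 2 * (y j₀ 1 - y k 1)) * e1
        + (-(g 2) * (y j₀ 0 - y k 0) + g 1 * (y j₀ 1 - y k 1) + (t j₀ - t k)) * e2
    have hnrm : ‖y j₀ - y k‖ = Real.sqrt ((t k - t j₀) ^ 2 / (g 1 ^ 2 + g 2 ^ 2)) := by
      rw [EuclideanSpace.norm_eq]
      congr 1
      rw [Fin.sum_univ_two]
      simp only [PiLp.sub_apply, Real.norm_eq_abs, sq_abs]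
      exact hsq
    have hlog : Real.log ‖y j₀ - y k‖
        = Real.log (t k - t j₀) - Real.log (g 1 ^ 2 + g 2 ^ 2) / 2 := by
      rw [hnrm, Real.log_sqrt (by positivity),
        Real.log_div (by positivity) hm.ne', Real.log_pow]
      push_cast
      ring
    have hDtRe : DtR 4 y α j₀ k = 1 / (2 * Real.pi) * Real.log ‖y j₀ - y k‖ := by
      simp [DtR, Matrix.of_apply, if_neg (Ne.symm hk)]
    have h := hrow k
    rw [hDtRe] at h
    have h' := congrArg (fun x => (2 * Real.pi) * x) h
    simp only [mul_zero] at h'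
    have hDk : g' 2 * Real.log ‖y j₀ - y k‖
        = -(2 * Real.pi) * (g' 0 + g' 1 * t k) := by
      linear_combination h' - (g' 2 * Real.log ‖y j₀ - y k‖) * hπ
    linear_combination hDk - g' 2 * hlog
  -- three points on the same side of the minimum
  have hfin : ∀ j : Fin 4, j + 1 ≠ j ∧ j + 2 ≠ j ∧ j + 3 ≠ j ∧
      j + 1 ≠ j + 2 ∧ j + 1 ≠ j + 3 ∧ j + 2 ≠ j + 3 := by decide
  obtain ⟨n1, n2, n3, n12, n13, n23⟩ := hfin j₀
  have hpos : ∀ k, k ≠ j₀ → 0 < t k - t j₀ := by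
    intro k hk
    have h1 := hj₀ k
    have h2 : t j₀ ≠ t k := fun h => hk (htinj h).symm
    have := lt_of_le_of_ne h1 h2
    linarith
  have tne : ∀ k l : Fin 4, k ≠ l → t k - t j₀ ≠ t l - t j₀ := by
    intro k l hkl h
    exact hkl (htinj (by linarith))
  exact log_affine_three' hg2 (hpos _ n1) (hpos _ n2) (hpos _ n3)
    (tne _ _ n12) (tne _ _ n13) (tne _ _ n23)
    (hkey _ n1) (hkey _ n2) (hkey _ n3)
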